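/- arXiv:1311.0088 — 6 statements merged into one kernel-verified Lean document; each statement's English description precedes it below -/
import Mathlib

section
/- Let R be a commutative ring and L : R^n → R^m (with m ≤ n) an R-linear map given by a matrix. Let a_L = ann(coker L) and I_m(L) the ideal generated by the m×m minors of L. Then I_m(L) ⊆ a_L and (a_L)^m ⊆ I_m(L). -/
open Matrix Finset

section Aux
variable {R : Type*} [CommRing R] {m n : ℕ}

/-- Cauchy–Binet style expansion. -/
lemma det_mul_expand (L : Matrix (Fin m) (Fin n) R) (W : Matrix (Fin n) (Fin m) R) :
    (L * W).det = ∑ σ : Fin m → Fin n, (∏ i, W (σ i) i) * (L.submatrix id σ).det := by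
  have h1 : (L * W).det = (Wᵀ * Lᵀ).det := by rw [← Matrix.det_transpose, Matrix.transpose_mul]
  have h2 : (Wᵀ * Lᵀ) = Matrix.of (fun i : Fin m => ∑ j : Fin n, W j i • Lᵀ j) := by
    ext i k
    simp [Matrix.mul_apply, Matrix.transpose_apply, mul_comm]
  rw [h1, h2]
  have hs := (Matrix.detRowAlternating (R := R) (n := Fin m)).toMultilinearMap.map_sum
    (g := fun (i : Fin m) (j : Fin n) => W j i • Lᵀ j)
  show (Matrix.detRowAlternating (R := R) (n := Fin m)).toMultilinearMap
      (fun i : Fin m => ∑ j : Fin n, W j i • Lᵀ j) = _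
  rw [hs]
  refine Finset.sum_congr rfl fun σ _ => ?_
  have hsm := (Matrix.detRowAlternating (R := R) (n := Fin m)).toMultilinearMap.map_smul_univ
      (fun i => W (σ i) i) (fun i => Lᵀ (σ i))
  rw [show (fun i => W (σ i) i • Lᵀ (σ i)) = (fun i => (fun i => W (σ i) i) i • (fun i => Lᵀ (σ i)) i) from rfl, hsm]
  have h3 : Matrix.detRowAlternating (fun i : Fin m => Lᵀ (σ i)) = (L.submatrix id σ).det := by
    rw [← Matrix.det_transpose (L.submatrix id σ)]
    rfl
  show (∏ i, W (σ i) i) • Matrix.detRowAlternating (fun i : Fin m => Lᵀ (σ i)) = _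
  rw [h3, smul_eq_mul]

lemma minor_mem_annCoker (L : Matrix (Fin m) (Fin n) R) (g : Fin m ↪ Fin n) :
    (L.submatrix id g).det ∈ (LinearMap.range L.mulVecLin).colon ⊤ := by
  rw [Submodule.mem_colon]
  intro v _
  set M := L.submatrix id g with hM
  set u := M.adjugate.mulVec v with hu
  refine ⟨fun j => ∑ i, if g i = j then u i else 0, ?_⟩
  have key : L.mulVec (fun j => ∑ i, if g i = j then u i else 0) = M.mulVec u := by
    funext k
    simp only [Matrix.mulVec, dotProduct, Finset.mul_sum, mul_ite, mul_zero]
    rw [Finset.sum_comm]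
    simp [Finset.sum_ite_eq, hM, Matrix.submatrix_apply]
  rw [Matrix.mulVecLin_apply, key, Matrix.mulVec_mulVec, Matrix.mul_adjugate,
    Matrix.smul_mulVec, Matrix.one_mulVec]
end Aux

section Aux2
variable {R : Type*} [CommRing R] {m n : ℕ}

lemma prod_mem_maxMinors (L : Matrix (Fin m) (Fin n) R) (f : Fin m → R)
    (hf : ∀ i, f i ∈ (LinearMap.range L.mulVecLin).colon ⊤) :
    ∏ i, f i ∈ Ideal.span { d : R | ∃ g : Fin m ↪ Fin n, d = (L.submatrix id g).det } := by
  have hw : ∀ i : Fin m, ∃ w : Fin n → R, L.mulVec w = f i • (Pi.single i 1 : Fin m → R) := by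
    intro i
    obtain ⟨w, hw⟩ := Submodule.mem_colon.mp (hf i) (Pi.single i 1) trivial
    exact ⟨w, hw⟩
  choose w hwspec using hw
  set W : Matrix (Fin n) (Fin m) R := Matrix.of (fun j i => w i j) with hW
  have hLW : L * W = Matrix.diagonal f := by
    ext k i
    have := congrFun (hwspec i) k
    simp only [Matrix.mulVec, dotProduct] at this
    simp only [Matrix.mul_apply, hW, Matrix.of_apply, this, Matrix.diagonal_apply,
      Pi.smul_apply, Pi.single_apply, smul_eq_mul]
    by_cases h : k = i <;> simp [h, eq_comm]
  have hdet : ∏ i, f i = (L * W).det := by rw [hLW, Matrix.det_diagonal]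
  rw [hdet, det_mul_expand]
  refine Ideal.sum_mem _ fun σ _ => ?_
  by_cases hσ : Function.Injective σ
  · exact Ideal.mul_mem_left _ _ (Ideal.subset_span ⟨⟨σ, hσ⟩, rfl⟩)
  · have : (L.submatrix id σ).det = 0 := by
      obtain ⟨i, j, hij, hne⟩ : ∃ i j, σ i = σ j ∧ i ≠ j := by
        simp only [Function.Injective, not_forall] at hσ
        obtain ⟨i, j, h1, h2⟩ := hσ
        exact ⟨i, j, h1, h2⟩
      refine Matrix.det_zero_of_column_eq hne ?_
      intro k
      simp [Matrix.submatrix_apply, hij]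
    rw [this, mul_zero]
    exact Ideal.zero_mem _
end Aux2

/-- The ideal of maximal (`m × m`) minors of a matrix `L ∈ Mat(m,n;R)`. -/
noncomputable def maxMinorsIdeal {R : Type*} [CommRing R] {m n : ℕ}
    (L : Matrix (Fin m) (Fin n) R) : Ideal R :=
  Ideal.span { d : R | ∃ g : Fin m ↪ Fin n, d = (L.submatrix id g).det }

/-- The annihilator of the cokernel of `L : R^n → R^m`,
i.e. `{f ∈ R : f • R^m ⊆ L(R^n)}`. -/
noncomputable def annCoker {R : Type*} [CommRing R] {m n : ℕ}
    (L : Matrix (Fin m) (Fin n) R) : Ideal R :=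
  (LinearMap.range L.mulVecLin).colon ⊤

/-- For `L ∈ Mat(m,n;R)` with `m ≤ n`, one has `I_m(L) ⊆ a_L` and `(a_L)^m ⊆ I_m(L)`. -/
theorem stmt0 {R : Type*} [CommRing R] {m n : ℕ} (hmn : m ≤ n)
    (L : Matrix (Fin m) (Fin n) R) :
    maxMinorsIdeal L ≤ annCoker L ∧ (annCoker L) ^ m ≤ maxMinorsIdeal L := by
  constructor
  · rw [maxMinorsIdeal, Ideal.span_le]
    rintro d ⟨g, rfl⟩
    exact minor_mem_annCoker L g
  · intro x hx
    set a := annCoker L with ha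
    set J : ℕ → Ideal R := fun k =>
      Ideal.span { d : R | ∃ f : Fin k → R, (∀ i, f i ∈ a) ∧ d = ∏ i, f i } with hJ
    have hJm : J m ≤ maxMinorsIdeal L := by
      rw [hJ, Ideal.span_le]
      rintro d ⟨f, hf, rfl⟩
      exact prod_mem_maxMinors L f hf
    refine hJm ?_
    refine Submodule.pow_induction_on_left' (M := a)
      (C := fun k (x : R) _ => x ∈ J k) ?_ ?_ ?_ hx
    · intro r
      have h1 : (1 : R) ∈ J 0 :=
        Ideal.subset_span ⟨Fin.elim0, fun i => i.elim0, by simp⟩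
      simpa using Ideal.mul_mem_left _ r h1
    · intro x y i hx hy cx cy
      exact add_mem cx cy
    · intro c hc i x hxmem cx
      refine Submodule.span_induction ?_ ?_ ?_ ?_ cx
      · rintro d ⟨f, hf, rfl⟩
        refine Ideal.subset_span ⟨Fin.cons c f, ?_, ?_⟩
        · intro j
          refine Fin.cases ?_ ?_ j
          · simpa using hc
          · intro j'; simpa using hf j'
        · rw [Fin.prod_cons]
      · simp
      · intro u v _ _ hu hv
        rw [mul_add]; exact add_mem hu hv
      · intro r u _ hu
        rw [smul_eq_mul, mul_left_comm]
        exact Ideal.mul_mem_left _ r hu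
end

section
/- Let R be a commutative ring, a ⊆ R an ideal, and J a finitely generated ideal with a ⊆ J and J² ⊆ J·a. Then J is contained in the integral closure of a, i.e. every element of J is integral over a. -/
/-- If `a ⊆ J`, `J` is finitely generated and `J² ⊆ J·a`, then every element of `J`
is integral over `a`: it satisfies `x^n + c₁x^{n-1} + … + c_n = 0` with `cᵢ ∈ aⁱ`. -/
theorem stmt5 {R : Type*} [CommRing R] (a J : Ideal R)
    (haJ : a ≤ J) (hfg : J.FG) (hJ : J * J ≤ J * a) :
    ∀ x ∈ J, ∃ n : ℕ, 0 < n ∧ ∃ c : ℕ → R,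
      (∀ i, 1 ≤ i → i ≤ n → c i ∈ a ^ i) ∧
      x ^ n + ∑ i ∈ Finset.Icc 1 n, c i * x ^ (n - i) = 0 := by
  intro x hx
  haveI : Module.Finite R J := Module.Finite.iff_fg.mpr hfg
  have hr : LinearMap.range (LinearMap.lsmul R J x) ≤ a • (⊤ : Submodule R J) := by
    rintro _ ⟨⟨y, hy⟩, rfl⟩
    rw [Submodule.mem_smul_top_iff]
    have h1 : x * y ∈ J * a := hJ (Ideal.mul_mem_mul hx hy)
    rw [mul_comm J a] at h1
    simpa [Ideal.smul_eq_mul] using h1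
  obtain ⟨p, hmonic, -, hcoeff, heval⟩ :=
    LinearMap.exists_monic_and_coeff_mem_pow_and_aeval_eq_zero_of_range_le_smul R
      (LinearMap.lsmul R J x) a hr
  set n := p.natDegree with hn
  -- `p.eval x * x = 0`
  have key : p.eval x * x = 0 := by
    have hf : (LinearMap.lsmul R J x) = algebraMap R (Module.End R J) x := by
      ext m; simp [Module.algebraMap_end_apply]
    rw [hf, Polynomial.aeval_algebraMap_apply_eq_algebraMap_eval] at heval
    have h2 := congrArg (fun f : Module.End R J => f ⟨x, hx⟩) heval
    simp only [Module.algebraMap_end_apply, LinearMap.zero_apply] at h2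
    have h3 := congrArg (Subtype.val) h2
    simpa [mul_comm] using h3
  refine ⟨n + 1, Nat.succ_pos n, fun i => if i ≤ n then p.coeff (n - i) else 0, ?_, ?_⟩
  · intro i hi1 hin
    by_cases h : i ≤ n
    · have h4 := hcoeff (n - i)
      rw [Nat.sub_sub_self h] at h4
      simpa [h] using h4
    · simp [h]
  · -- the polynomial equation
    have h2 : ∑ i ∈ Finset.Icc 1 (n + 1),
          (if i ≤ n then p.coeff (n - i) else 0) * x ^ (n + 1 - i)
        = ∑ k ∈ Finset.range n, p.coeff k * x ^ (k + 1) := by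
      rw [Finset.sum_Icc_succ_top (Nat.succ_le_succ (Nat.zero_le n))]
      have hlast : (if n + 1 ≤ n then p.coeff (n - (n + 1)) else 0)
          * x ^ (n + 1 - (n + 1)) = 0 := by
        rw [if_neg (Nat.not_succ_le_self n), zero_mul]
      rw [hlast, add_zero, ← Finset.Ico_add_one_right_eq_Icc, Finset.sum_Ico_eq_sum_range]
      rw [← Finset.sum_range_reflect (fun k => p.coeff k * x ^ (k + 1)) n]
      refine Finset.sum_congr rfl fun k hk => ?_
      rw [Finset.mem_range] at hk
      have h1 : 1 + k ≤ n := by omega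
      rw [if_pos h1]
      have e1 : n - (1 + k) = n - 1 - k := by omega
      have e2 : n + 1 - (1 + k) = (n - 1 - k) + 1 := by omega
      rw [e1, e2]
    have h3 : p.eval x * x = (∑ k ∈ Finset.range n, p.coeff k * x ^ (k + 1)) + x ^ (n + 1) := by
      rw [Polynomial.eval_eq_sum_range, ← hn, Finset.sum_mul, Finset.sum_range_succ,
        Polynomial.Monic.coeff_natDegree hmonic, one_mul, ← pow_succ]
      congr 1
      exact Finset.sum_congr rfl fun k _ => by ring
    rw [h2, add_comm, ← h3, key]
end

section
/- Let R = k[[x,y,z]] over a field k, p ≥ 1, and a = (x^p, y^p, z^p). Then the ideal J_z = ((x,y)^p, z^p) satisfies J_z² = J_z·a. -/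
open MvPowerSeries

lemma aux_sup_pow {R : Type*} [CommRing R] (I J : Ideal R) (n m : ℕ) :
    (I ⊔ J) ^ (n + m) ≤ I ^ n * (I ⊔ J) ^ m ⊔ J ^ m * (I ⊔ J) ^ n := by
  rw [← Ideal.add_eq_sup, add_pow, Ideal.sum_eq_sup]
  apply Finset.sup_le
  intro i hi
  simp only [Finset.mem_range] at hi
  refine Ideal.mul_le_left.trans ?_
  by_cases hn : n ≤ i
  · refine le_trans ?_ le_sup_left
    have h1 : I ^ i * J ^ (n + m - i) = I ^ n * (I ^ (i - n) * J ^ (n + m - i)) := by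
      rw [← mul_assoc, ← pow_add]
      congr 2
      omega
    rw [h1]
    refine Ideal.mul_mono_right ?_
    have h2 : I ^ (i - n) * J ^ (n + m - i) ≤ (I + J) ^ (i - n) * (I + J) ^ (n + m - i) :=
      Ideal.mul_mono (Ideal.pow_right_mono le_sup_left _)
        (Ideal.pow_right_mono le_sup_right _)
    rw [← pow_add] at h2
    have h3 : i - n + (n + m - i) = m := by omega
    rwa [h3] at h2
  · refine le_trans ?_ le_sup_right
    have h1 : I ^ i * J ^ (n + m - i) = J ^ m * (I ^ i * J ^ (n + m - i - m)) := by
      rw [mul_comm (J ^ m), mul_assoc, ← pow_add]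
      congr 2
      omega
    rw [h1]
    refine Ideal.mul_mono_right ?_
    have h2 : I ^ i * J ^ (n + m - i - m) ≤ (I + J) ^ i * (I + J) ^ (n + m - i - m) :=
      Ideal.mul_mono (Ideal.pow_right_mono le_sup_left _)
        (Ideal.pow_right_mono le_sup_right _)
    rw [← pow_add] at h2
    exact h2.trans (Ideal.pow_le_pow_right (by omega))

set_option maxHeartbeats 1000000 in
/-- In `R = k[[x,y,z]]`, with `a = (x^p,y^p,z^p)` and `J_z = ((x,y)^p, z^p)`,
one has `J_z² = J_z·a`. -/
theorem stmt6 {k : Type*} [Field k] [CharZero k] (p : ℕ) (hp : 1 ≤ p) :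
    let R := MvPowerSeries (Fin 3) k
    let x : R := X 0
    let y : R := X 1
    let z : R := X 2
    let a : Ideal R := Ideal.span {x ^ p, y ^ p, z ^ p}
    let Jz : Ideal R := (Ideal.span {x, y}) ^ p ⊔ Ideal.span {z ^ p}
    Jz * Jz = Jz * a := by
  intro R x y z a Jz
  set I : Ideal R := Ideal.span {x, y} with hI
  set Z : Ideal R := Ideal.span {z ^ p} with hZ
  -- a ≤ Jz
  have hxI : x ∈ I := Ideal.subset_span (by simp)
  have hyI : y ∈ I := Ideal.subset_span (by simp)
  have haJ : a ≤ Jz := by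
    rw [Ideal.span_le]
    rintro w hw
    simp only [Set.mem_insert_iff, Set.mem_singleton_iff] at hw
    rcases hw with rfl | rfl | rfl
    · exact Ideal.mem_sup_left (Ideal.pow_mem_pow hxI p)
    · exact Ideal.mem_sup_left (Ideal.pow_mem_pow hyI p)
    · exact Ideal.mem_sup_right (Ideal.subset_span rfl)
  have hZa : Z ≤ a := Ideal.span_mono (by simp)
  -- key : I ^ p * I ^ p ≤ Jz * a
  have hkey : I ^ p * I ^ p ≤ Jz * a := by
    have h0 : I = Ideal.span {x} ⊔ Ideal.span {y} := by
      rw [hI, Ideal.span_insert]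
    have h1 : I ^ (p + p) ≤ Ideal.span {x} ^ p * I ^ p ⊔ Ideal.span {y} ^ p * I ^ p := by
      conv_lhs => rw [h0]
      exact (aux_sup_pow _ _ p p).trans (by rw [← h0])
    rw [← pow_add]
    refine h1.trans ?_
    have hx : Ideal.span {x} ^ p ≤ a := by
      rw [Ideal.span_singleton_pow, Ideal.span_singleton_le_iff_mem]
      exact Ideal.subset_span (by simp)
    have hy : Ideal.span {y} ^ p ≤ a := by
      rw [Ideal.span_singleton_pow, Ideal.span_singleton_le_iff_mem]
      exact Ideal.subset_span (by simp)
    have hIJ : I ^ p ≤ Jz := le_sup_left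
    refine sup_le ?_ ?_
    · rw [mul_comm]
      exact Ideal.mul_mono hIJ hx
    · rw [mul_comm]
      exact Ideal.mul_mono hIJ hy
  refine le_antisymm ?_ (Ideal.mul_mono_right haJ)
  have hJz : Jz = I ^ p ⊔ Z := rfl
  calc Jz * Jz = I ^ p * Jz ⊔ Z * Jz := by rw [hJz, Ideal.sup_mul]
    _ ≤ Jz * a := by
      refine sup_le ?_ ?_
      · calc I ^ p * Jz = I ^ p * I ^ p ⊔ I ^ p * Z := by rw [hJz, Ideal.mul_sup]
          _ ≤ Jz * a := sup_le hkey (Ideal.mul_mono le_sup_left hZa)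
      · rw [mul_comm]
        exact Ideal.mul_mono le_rfl (hZa)
end

section
/- Let R = k[[x_1,x_2]] over a field k and L = (x_1^k, x_2^k) ∈ Mat(1,2;R) for k ≥ 1. Then the ideal m^k = (x_1,x_2)^k satisfies (m^k)² = m^k·(x_1^k, x_2^k). -/
open MvPowerSeries

lemma span_pair_pow {R : Type*} [CommRing R] (x₁ x₂ : R) (n : ℕ) :
    Ideal.span {x₁, x₂} ^ n =
      Ideal.span {p | ∃ i ≤ n, p = x₁ ^ i * x₂ ^ (n - i)} := by
  induction n with
  | zero =>
    simp only [pow_zero]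
    have : {p : R | ∃ i ≤ 0, p = x₁ ^ i * x₂ ^ (0 - i)} = {1} := by
      ext p; simp
    rw [this, Ideal.span_singleton_one, Ideal.one_eq_top]
  | succ n ih =>
    rw [pow_succ, ih, Ideal.span_mul_span']
    congr 1
    ext p
    constructor
    · rintro ⟨a, ⟨i, hi, rfl⟩, b, hb, rfl⟩
      rcases hb with h | h
      · refine ⟨i + 1, by omega, ?_⟩
        show x₁ ^ i * x₂ ^ (n - i) * b = _
        rw [h, mul_comm _ x₁, ← mul_assoc, ← pow_succ']; congr 2; omega
      · refine ⟨i, by omega, ?_⟩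
        show x₁ ^ i * x₂ ^ (n - i) * b = _
        rw [h, mul_assoc, ← pow_succ]; congr 2; omega
    · rintro ⟨i, hi, rfl⟩
      rcases Nat.eq_zero_or_pos i with rfl | hpos
      · refine ⟨x₁ ^ 0 * x₂ ^ (n - 0), ⟨0, by omega, rfl⟩, x₂, by simp, ?_⟩
        show x₁ ^ 0 * x₂ ^ (n - 0) * x₂ = _
        rw [mul_assoc, ← pow_succ]; congr 2
      · refine ⟨x₁ ^ (i - 1) * x₂ ^ (n - (i - 1)), ⟨i - 1, by omega, rfl⟩, x₁, by simp, ?_⟩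
        show x₁ ^ (i - 1) * x₂ ^ (n - (i - 1)) * x₁ = _
        rw [mul_comm _ x₁, ← mul_assoc, ← pow_succ']; congr 2 <;> omega

/-- In `R = k[[x₁,x₂]]`, the ideal `m^k = (x₁,x₂)^k` satisfies
`(m^k)² = m^k·(x₁^k, x₂^k)`. -/
theorem stmt7 {K : Type*} [Field K] [CharZero K] (k : ℕ) (hk : 1 ≤ k) :
    let R := MvPowerSeries (Fin 2) K
    let x₁ : R := X 0
    let x₂ : R := X 1
    let m : Ideal R := Ideal.span {x₁, x₂}
    (m ^ k) * (m ^ k) = (m ^ k) * Ideal.span {x₁ ^ k, x₂ ^ k} := by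
  intro R x₁ x₂ m
  have hx1 : x₁ ∈ m := Ideal.subset_span (Set.mem_insert _ _)
  have hx2 : x₂ ∈ m := Ideal.subset_span (Set.mem_insert_of_mem _ rfl)
  apply le_antisymm
  · rw [← pow_add, span_pair_pow, Ideal.span_le]
    rintro p ⟨i, hi, rfl⟩
    rcases le_or_gt k i with h | h
    · have : x₁ ^ i * x₂ ^ (k + k - i) =
          (x₁ ^ (i - k) * x₂ ^ (k - (i - k))) * x₁ ^ k := by
        rw [mul_comm _ (x₁ ^ k), ← mul_assoc, ← pow_add]
        congr 2 <;> omega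
      rw [this]
      exact Ideal.mul_mem_mul
        ((span_pair_pow x₁ x₂ k).symm ▸ Ideal.subset_span ⟨i - k, by omega, rfl⟩)
        (Ideal.subset_span (Set.mem_insert _ _))
    · have : x₁ ^ i * x₂ ^ (k + k - i) =
          (x₁ ^ i * x₂ ^ (k - i)) * x₂ ^ k := by
        rw [mul_assoc, ← pow_add]
        congr 2; omega
      rw [this]
      exact Ideal.mul_mem_mul
        ((span_pair_pow x₁ x₂ k).symm ▸ Ideal.subset_span ⟨i, by omega, rfl⟩)
        (Ideal.subset_span (Set.mem_insert_of_mem _ rfl))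
  · refine Ideal.mul_mono_right (Ideal.span_le.2 ?_)
    rintro p (rfl | rfl)
    · exact Ideal.pow_mem_pow hx1 k
    · exact Ideal.pow_mem_pow hx2 k
end

section
/- Let V, W be groups, L : V → W a group homomorphism, (V_j) a descending filtration of V by normal subgroups, and H : V → W a map with H(1)=1 and H(y)^{-1}H(yv) ∈ L(V_{j+1}) for all y ∈ V₁, v ∈ V_j, j ≥ 1. Then for every v ∈ V₁ there exists a sequence (y^{(n)}) in V₁ with y^{(1)} = v, y^{(n+1)}(y^{(n)})^{-1} ∈ V_{n+1}, and L(y^{(n)})H(y^{(n)})L(v)^{-1} ∈ L(V_{n+1}) for all n. -/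
open scoped commutatorElement

/-- Order-by-order solvability of `L(y)H(y) = L(v)`: if `H` is a higher-order term
for the filtration `(V j)`, then every `v ∈ V₁` admits an order-by-order solution. -/
theorem stmt11 {V W : Type*} [Group V] [Group W] (L : V →* W)
    (Vf : ℕ → Subgroup V)
    (hdesc : ∀ j, Vf (j + 1) ≤ Vf j)
    (hnormal : ∀ j, (Vf j).Normal)
    (hcomm : ∀ j, 1 ≤ j → ∀ a ∈ Vf 1, ∀ b ∈ Vf j, ⁅a, b⁆ ∈ Vf (j + 1))
    (H : V → W) (hH1 : H 1 = 1)
    (hHord : ∀ y ∈ Vf 1, ∀ j, 1 ≤ j → ∀ v ∈ Vf j,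
      (H y)⁻¹ * H (y * v) ∈ (Vf (j + 1)).map L) :
    ∀ v ∈ Vf 1, ∃ y : ℕ → V, y 1 = v ∧
      (∀ n, 1 ≤ n → y n ∈ Vf 1) ∧
      (∀ n, 1 ≤ n → y (n + 1) * (y n)⁻¹ ∈ Vf (n + 1)) ∧
      (∀ n, 1 ≤ n → L (y n) * H (y n) * (L v)⁻¹ ∈ (Vf (n + 1)).map L) := by
  intro v hv
  -- descending chain
  have hle1 : ∀ m, 1 ≤ m → Vf m ≤ Vf 1 := by
    intro m hm
    induction m with
    | zero => omega
    | succ k ih =>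
      rcases Nat.eq_zero_or_pos k with rfl | hk
      · exact le_refl _
      · exact le_trans (hdesc k) (ih hk)
  -- base case: L v * H v * (L v)⁻¹ ∈ L(Vf 2)
  have base : L v * H v * (L v)⁻¹ ∈ (Vf (1 + 1)).map L := by
    obtain ⟨z, hz, hLz⟩ := hHord 1 (one_mem _) 1 le_rfl v hv
    refine ⟨v * z * v⁻¹, (hnormal 2).conj_mem z hz v, ?_⟩
    have hHv : H v = L z := by
      rw [hH1, inv_one, one_mul, one_mul] at hLz
      exact hLz.symm
    simp [hHv, mul_assoc]
  -- key inductive step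
  have key : ∀ n : ℕ, 1 ≤ n → ∀ y : V, y ∈ Vf 1 →
      L y * H y * (L v)⁻¹ ∈ (Vf (n + 1)).map L →
      ∃ y' : V, y' ∈ Vf 1 ∧ y' * y⁻¹ ∈ Vf (n + 1) ∧
        L y' * H y' * (L v)⁻¹ ∈ (Vf (n + 1 + 1)).map L := by
    intro n hn y hy ⟨w, hw, hLw⟩
    refine ⟨w⁻¹ * y, mul_mem (inv_mem (hle1 (n + 1) (by omega) hw)) hy, ?_, ?_⟩
    · simpa [mul_assoc] using inv_mem hw
    · have hu : y⁻¹ * w⁻¹ * y ∈ Vf (n + 1) := by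
        simpa [mul_assoc] using (hnormal (n + 1)).conj_mem w⁻¹ (inv_mem hw) y⁻¹
      obtain ⟨z, hz, hLz⟩ := hHord y hy (n + 1) (by omega) _ hu
      refine ⟨v * z * v⁻¹, (hnormal (n + 2)).conj_mem z hz v, ?_⟩
      have hH2 : H (y * (y⁻¹ * w⁻¹ * y)) = H y * L z := by rw [hLz]; group
      have hLyHy : L y * H y = L w * L v := by rw [hLw]; group
      have step1 : L (y * (y⁻¹ * w⁻¹ * y)) * H (y * (y⁻¹ * w⁻¹ * y)) * (L v)⁻¹
          = (L w)⁻¹ * (L y * H y) * L z * (L v)⁻¹ := by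
        rw [hH2]; simp only [map_mul, map_inv]; group
      have hrw : w⁻¹ * y = y * (y⁻¹ * w⁻¹ * y) := by group
      rw [hrw, step1, hLyHy]
      simp only [map_mul, map_inv]
      group
  choose f hf1 hf2 hf3 using key
  -- build the sequence
  let g : (n : ℕ) → {y : V // y ∈ Vf 1 ∧ L y * H y * (L v)⁻¹ ∈ (Vf (n + 1 + 1)).map L} :=
    fun n => Nat.rec ⟨v, hv, base⟩
      (fun k ih => ⟨f (k + 1) (by omega) ih.1 ih.2.1 ih.2.2,
        hf1 (k + 1) (by omega) ih.1 ih.2.1 ih.2.2,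
        hf3 (k + 1) (by omega) ih.1 ih.2.1 ih.2.2⟩) n
  refine ⟨fun n => (g (n - 1)).1, rfl, ?_, ?_, ?_⟩
  · intro n _; exact (g (n - 1)).2.1
  · intro n hn
    obtain ⟨k, rfl⟩ : ∃ k, n = k + 1 := ⟨n - 1, by omega⟩
    exact hf2 (k + 1) (by omega) (g k).1 (g k).2.1 (g k).2.2
  · intro n hn
    obtain ⟨k, rfl⟩ : ∃ k, n = k + 1 := ⟨n - 1, by omega⟩
    exact (g k).2.2
end

section
/- Let V, W be groups with L : V → W a homomorphism, (V_j) a filtration by normal subgroups with [V₁,V_j] ⊆ V_{j+1}, and H : V → W a higher-order map (H(y)^{-1}H(yV_j) ⊆ L(V_{j+1}) for y ∈ V₁, j ≥ 1). Suppose L is injective and (y₁^{(n)}), (y₂^{(n)}) are two order-by-order solutions of L(y)H(y) = L(v) with y₁^{(1)}, y₂^{(1)} ∈ V₁. Then y₁^{(n)}(y₂^{(n)})^{-1} ∈ V_n for every n. -/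
open scoped commutatorElement

/-- Eventual uniqueness: if `L` is injective, any two order-by-order solutions
`y₁, y₂` of `L(y)H(y) = L(v)` with `y₁⁽¹⁾, y₂⁽¹⁾ ∈ V₁` satisfy
`y₁⁽ⁿ⁾(y₂⁽ⁿ⁾)⁻¹ ∈ V_n` for all `n`. -/
theorem stmt12 {V W : Type*} [Group V] [Group W] (L : V →* W)
    (Vf : ℕ → Subgroup V)
    (hdesc : ∀ j, Vf (j + 1) ≤ Vf j)
    (hnormal : ∀ j, (Vf j).Normal)
    (hcomm : ∀ j, 1 ≤ j → ∀ a ∈ Vf 1, ∀ b ∈ Vf j, ⁅a, b⁆ ∈ Vf (j + 1))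
    (H : V → W) (hH1 : H 1 = 1)
    (hHord : ∀ y ∈ Vf 1, ∀ j, 1 ≤ j → ∀ w ∈ Vf j,
      (H y)⁻¹ * H (y * w) ∈ (Vf (j + 1)).map L)
    (hinj : Function.Injective L)
    (v : V) (y₁ y₂ : ℕ → V)
    (h₁V : y₁ 1 ∈ Vf 1) (h₂V : y₂ 1 ∈ Vf 1)
    (h₁cauchy : ∀ n, 1 ≤ n → y₁ (n + 1) * (y₁ n)⁻¹ ∈ Vf n)
    (h₂cauchy : ∀ n, 1 ≤ n → y₂ (n + 1) * (y₂ n)⁻¹ ∈ Vf n)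
    (h₁sol : ∀ n, 1 ≤ n → L (y₁ n) * H (y₁ n) * (L v)⁻¹ ∈ (Vf n).map L)
    (h₂sol : ∀ n, 1 ≤ n → L (y₂ n) * H (y₂ n) * (L v)⁻¹ ∈ (Vf n).map L) :
    ∀ n, 1 ≤ n → y₁ n * (y₂ n)⁻¹ ∈ Vf n := by
  -- every Vf j (j ≥ 1) is contained in Vf 1
  have hle1 : ∀ j, 1 ≤ j → Vf j ≤ Vf 1 := by
    intro j hj
    induction j, hj using Nat.le_induction with
    | base => exact le_rfl
    | succ k hk ih => exact (hdesc k).trans ih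
  -- y₂ n ∈ Vf 1 for all n ≥ 1
  have h₂mem : ∀ n, 1 ≤ n → y₂ n ∈ Vf 1 := by
    intro n hn
    induction n, hn using Nat.le_induction with
    | base => exact h₂V
    | succ k hk ih =>
      have : (y₂ (k + 1) * (y₂ k)⁻¹) * y₂ k ∈ Vf 1 :=
        mul_mem (hle1 k hk (h₂cauchy k hk)) ih
      simpa using this
  intro n hn
  induction n, hn using Nat.le_induction with
  | base => exact mul_mem h₁V (inv_mem h₂V)
  | succ n hn ih =>
    -- difference at stage n+1 lies in Vf n
    have hd : y₁ (n + 1) * (y₂ (n + 1))⁻¹ ∈ Vf n := by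
      have he : y₁ (n + 1) * (y₂ (n + 1))⁻¹ =
          (y₁ (n + 1) * (y₁ n)⁻¹) * (y₁ n * (y₂ n)⁻¹) *
            (y₂ (n + 1) * (y₂ n)⁻¹)⁻¹ := by group
      rw [he]
      exact mul_mem (mul_mem (h₁cauchy n hn) ih) (inv_mem (h₂cauchy n hn))
    have hw : (y₂ (n + 1))⁻¹ * y₁ (n + 1) ∈ Vf n :=
      (hnormal n).mem_comm hd
    -- H-increment between the two solutions, in L(Vf (n+1))
    obtain ⟨c, hc, hcL⟩ :=
      hHord (y₂ (n + 1)) (h₂mem (n + 1) (by omega)) n hn _ hw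
    rw [show y₂ (n + 1) * ((y₂ (n + 1))⁻¹ * y₁ (n + 1)) = y₁ (n + 1) from by
      group] at hcL
    -- solution properties at stage n+1
    obtain ⟨p, hp, hpL⟩ := h₁sol (n + 1) (by omega)
    obtain ⟨m, hm, hmL⟩ := h₂sol (n + 1) (by omega)
    -- H(y₂ (n+1)) is in the image of L
    set u : V := (y₂ (n + 1))⁻¹ * m * v with hu_def
    have hu : L u = H (y₂ (n + 1)) := by
      simp only [hu_def, map_mul, map_inv]
      rw [hmL]; group
    -- the key identity in W
    have key : L (y₁ (n + 1)) * L u * L c * (L u)⁻¹ * (L (y₂ (n + 1)))⁻¹ =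
        L p * (L m)⁻¹ := by
      rw [hu, hcL, hpL, hmL]
      group
    have key2 : y₁ (n + 1) * u * c * u⁻¹ * (y₂ (n + 1))⁻¹ = p * m⁻¹ := by
      apply hinj
      simpa only [map_mul, map_inv] using key
    have hbig : y₁ (n + 1) * u * c * u⁻¹ * (y₂ (n + 1))⁻¹ ∈ Vf (n + 1) := by
      rw [key2]; exact mul_mem hp (inv_mem hm)
    have hconj : u * c * u⁻¹ ∈ Vf (n + 1) := by
      have := (hnormal (n + 1)).conj_mem c hc u
      simpa [mul_assoc] using this
    have hfin : y₁ (n + 1) * (y₂ (n + 1))⁻¹ =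
        (y₁ (n + 1) * u * c * u⁻¹ * (y₂ (n + 1))⁻¹) *
          (y₂ (n + 1) * (u * c * u⁻¹)⁻¹ * (y₂ (n + 1))⁻¹) := by group
    rw [hfin]
    exact mul_mem hbig ((hnormal (n + 1)).conj_mem _ (inv_mem hconj) _)
end
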